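/- Let F ⊆ ℝ^{n×m} be a nonempty closed set, q₀(Y) = tr(Yᵀ A₀ Y) + 2 tr(B₀ᵀ Y) + c₀ a quadratic function, Ŷ ∈ ℝ^{n×m}, and η > ‖A₀‖₂. Let d_F(Ŷ) = min{‖Y − Ŷ‖_F : Y ∈ F}. Then any minimizer Y* of q₀(Y) + η ‖Y − Ŷ‖_F² over F satisfies 0 ≤ ‖Y* − Ŷ‖_F − d_F(Ŷ) ≤ (‖A₀‖₂ d_F(Ŷ) + ‖∇q₀(Ŷ)‖_F) / (η − ‖A₀‖₂). -/

import Mathlib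

open Matrix Finset

/-- Frobenius norm of a real matrix. -/
noncomputable def frob {n m : ℕ} (M : Matrix (Fin n) (Fin m) ℝ) : ℝ :=
  Real.sqrt (∑ i, ∑ j, (M i j) ^ 2)

/-- Spectral (operator) norm of a square real matrix. -/
noncomputable def spec {n : ℕ} (A : Matrix (Fin n) (Fin n) ℝ) : ℝ :=
  ‖Matrix.toEuclideanCLM (𝕜 := ℝ) A‖

/-- Euclidean norm of a finitely-indexed real vector. -/
noncomputable def euc {ι : Type*} [Fintype ι] (x : ι → ℝ) : ℝ :=
  Real.sqrt (∑ i, (x i) ^ 2)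

/-- The quadratic function q(Y) = tr(Yᵀ A Y) + 2 tr(Bᵀ Y) + c. -/
noncomputable def quadF {n m : ℕ} (A : Matrix (Fin n) (Fin n) ℝ)
    (B : Matrix (Fin n) (Fin m) ℝ) (c : ℝ) (Y : Matrix (Fin n) (Fin m) ℝ) : ℝ :=
  (Yᵀ * A * Y).trace + 2 * (Bᵀ * Y).trace + c

/-- The gradient ∇q(Y) = 2(AY + B). -/
noncomputable def gradF {n m : ℕ} (A : Matrix (Fin n) (Fin n) ℝ)
    (B Y : Matrix (Fin n) (Fin m) ℝ) : Matrix (Fin n) (Fin m) ℝ :=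
  (2 : ℝ) • (A * Y + B)

/-- Frobenius distance from a point to a set of matrices. -/
noncomputable def distF {n m : ℕ} (F : Set (Matrix (Fin n) (Fin m) ℝ))
    (Z : Matrix (Fin n) (Fin m) ℝ) : ℝ :=
  sInf ((fun Y => frob (Y - Z)) '' F)

/-- Smallest singular value: σ_min(J) = inf{‖Jᵀξ‖₂ : ‖ξ‖₂ = 1}. -/
noncomputable def sigMin {ι κ : Type*} [Fintype ι] [Fintype κ] (J : Matrix ι κ ℝ) : ℝ :=
  sInf {r | ∃ ξ : ι → ℝ, euc ξ = 1 ∧ r = euc (J.transpose.mulVec ξ)}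

/-- Spectral norm of a rectangular matrix: sup{‖Jx‖₂ : ‖x‖₂ = 1}. -/
noncomputable def specR {ι κ : Type*} [Fintype ι] [Fintype κ] (J : Matrix ι κ ℝ) : ℝ :=
  sSup {r | ∃ x : κ → ℝ, euc x = 1 ∧ r = euc (J.mulVec x)}

/-- Maximum absolute row-sum norm ‖M‖₁. -/
noncomputable def rowNorm {n : ℕ} (A : Matrix (Fin n) (Fin n) ℝ) : ℝ :=
  ⨆ i, ∑ j, |A i j|

/-! ### Auxiliary lemmas -/

/-- The linear equivalence between matrices (with the Frobenius norm) and Euclidean space. -/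
noncomputable def matE (n m : ℕ) :
    Matrix (Fin n) (Fin m) ℝ ≃ₗ[ℝ] EuclideanSpace ℝ (Fin n × Fin m) where
  toFun M := (WithLp.equiv 2 _).symm fun p => M p.1 p.2
  invFun x := Matrix.of fun i j => x (i, j)
  map_add' _ _ := rfl
  map_smul' _ _ := rfl
  left_inv _ := rfl
  right_inv _ := rfl

lemma frob_eq_norm {n m : ℕ} (M : Matrix (Fin n) (Fin m) ℝ) : frob M = ‖matE n m M‖ := by
  rw [EuclideanSpace.norm_eq, frob]
  congr 1
  rw [Fintype.sum_prod_type]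
  refine Finset.sum_congr rfl fun i _ => Finset.sum_congr rfl fun j _ => ?_
  rw [Real.norm_eq_abs, sq_abs]
  rfl

lemma frob_dist {n m : ℕ} (Y Z : Matrix (Fin n) (Fin m) ℝ) :
    frob (Y - Z) = dist (matE n m Z) (matE n m Y) := by
  rw [dist_eq_norm', ← map_sub, frob_eq_norm]

lemma distF_eq_infDist {n m : ℕ} (F : Set (Matrix (Fin n) (Fin m) ℝ))
    (Z : Matrix (Fin n) (Fin m) ℝ) :
    distF F Z = Metric.infDist (matE n m Z) ((matE n m) '' F) := by
  rw [Metric.infDist_eq_iInf, iInf, ← Set.image_eq_range, Set.image_image, distF]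
  congr 1
  exact Set.image_congr fun Y _ => frob_dist Y Z

lemma distF_exists {n m : ℕ} (F : Set (Matrix (Fin n) (Fin m) ℝ)) (hFne : F.Nonempty)
    (hFcl : IsClosed F) (Z : Matrix (Fin n) (Fin m) ℝ) :
    ∃ Yb ∈ F, frob (Yb - Z) = distF F Z := by
  have hcl : IsClosed ((matE n m) '' F) :=
    (matE n m).toContinuousLinearEquiv.toHomeomorph.isClosedMap F hFcl
  obtain ⟨y, hy, hdy⟩ := hcl.exists_infDist_eq_dist (hFne.image _) (matE n m Z)
  obtain ⟨Yb, hYb, rfl⟩ := hy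
  exact ⟨Yb, hYb, by rw [frob_dist, distF_eq_infDist, hdy]⟩

lemma distF_le {n m : ℕ} (F : Set (Matrix (Fin n) (Fin m) ℝ))
    (Z Y : Matrix (Fin n) (Fin m) ℝ) (hY : Y ∈ F) : distF F Z ≤ frob (Y - Z) := by
  rw [distF_eq_infDist, frob_dist]
  exact Metric.infDist_le_dist_of_mem (Set.mem_image_of_mem _ hY)

lemma frob_nonneg {n m : ℕ} (M : Matrix (Fin n) (Fin m) ℝ) : 0 ≤ frob M :=
  Real.sqrt_nonneg _

lemma frob_sq {n m : ℕ} (M : Matrix (Fin n) (Fin m) ℝ) :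
    frob M ^ 2 = ∑ i, ∑ j, (M i j) ^ 2 :=
  Real.sq_sqrt (Finset.sum_nonneg fun _ _ => Finset.sum_nonneg fun _ _ => sq_nonneg _)

lemma spec_nonneg {n : ℕ} (A : Matrix (Fin n) (Fin n) ℝ) : 0 ≤ spec A := norm_nonneg _

lemma sum_flatten {n m : ℕ} (f : Fin n → Fin m → ℝ) :
    ∑ i, ∑ j, f i j = ∑ p : Fin n × Fin m, f p.1 p.2 :=
  (Fintype.sum_prod_type (f := fun p : Fin n × Fin m => f p.1 p.2)).symm

lemma trace_tm_eq_sum {n m : ℕ} (M N : Matrix (Fin n) (Fin m) ℝ) :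
    (Mᵀ * N).trace = ∑ i, ∑ j, M i j * N i j := by
  simp only [Matrix.trace, Matrix.diag, Matrix.mul_apply, Matrix.transpose_apply]
  exact Finset.sum_comm

/-- Cauchy–Schwarz for the Frobenius inner product. -/
lemma abs_trace_le {n m : ℕ} (M N : Matrix (Fin n) (Fin m) ℝ) :
    |(Mᵀ * N).trace| ≤ frob M * frob N := by
  rw [trace_tm_eq_sum, sum_flatten]
  have h := Finset.sum_mul_sq_le_sq_mul_sq Finset.univ
    (fun p : Fin n × Fin m => M p.1 p.2) (fun p : Fin n × Fin m => N p.1 p.2)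
  have h2 : |∑ p : Fin n × Fin m, M p.1 p.2 * N p.1 p.2| ≤
      Real.sqrt ((∑ p : Fin n × Fin m, M p.1 p.2 ^ 2) * ∑ p : Fin n × Fin m, N p.1 p.2 ^ 2) := by
    rw [← Real.sqrt_sq_eq_abs]
    exact Real.sqrt_le_sqrt h
  refine h2.trans_eq ?_
  rw [Real.sqrt_mul (Finset.sum_nonneg fun _ _ => sq_nonneg _), frob, frob,
    (sum_flatten fun i j => M i j ^ 2), (sum_flatten fun i j => N i j ^ 2)]

lemma abs_quad_vec_le {n : ℕ} (A : Matrix (Fin n) (Fin n) ℝ) (x : Fin n → ℝ) :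
    |∑ i, x i * (A.mulVec x) i| ≤ spec A * ∑ i, (x i) ^ 2 := by
  set v : EuclideanSpace ℝ (Fin n) := (WithLp.equiv 2 _).symm x with hv
  have hT : (Matrix.toEuclideanCLM (𝕜 := ℝ) A) v = (WithLp.equiv 2 _).symm (A.mulVec x) := by
    rw [hv]; rfl
  have hinner : (inner ℝ v ((Matrix.toEuclideanCLM (𝕜 := ℝ) A) v) : ℝ)
      = ∑ i, x i * (A.mulVec x) i := by
    rw [hT]
    simp [PiLp.inner_apply, RCLike.inner_apply, hv, mul_comm]
  have hnv : ‖v‖ ^ 2 = ∑ i, (x i) ^ 2 := by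
    rw [EuclideanSpace.norm_eq, Real.sq_sqrt (Finset.sum_nonneg fun _ _ => sq_nonneg _)]
    refine Finset.sum_congr rfl fun i _ => ?_
    rw [Real.norm_eq_abs, sq_abs]
    rfl
  calc |∑ i, x i * (A.mulVec x) i|
      = |(inner ℝ v ((Matrix.toEuclideanCLM (𝕜 := ℝ) A) v) : ℝ)| := by rw [hinner]
    _ ≤ ‖v‖ * ‖(Matrix.toEuclideanCLM (𝕜 := ℝ) A) v‖ := abs_real_inner_le_norm _ _
    _ ≤ ‖v‖ * (spec A * ‖v‖) :=
        mul_le_mul_of_nonneg_left (ContinuousLinearMap.le_opNorm _ _) (norm_nonneg _)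
    _ = spec A * ‖v‖ ^ 2 := by ring
    _ = spec A * ∑ i, (x i) ^ 2 := by rw [hnv]

/-- The quadratic form bound |tr(Hᵀ A H)| ≤ ‖A‖₂ ‖H‖_F². -/
lemma abs_trace_quad_le {n m : ℕ} (A : Matrix (Fin n) (Fin n) ℝ)
    (H : Matrix (Fin n) (Fin m) ℝ) :
    |(Hᵀ * A * H).trace| ≤ spec A * (frob H) ^ 2 := by
  have hcol : (Hᵀ * A * H).trace
      = ∑ j, ∑ i, (fun k => H k j) i * (A.mulVec (fun k => H k j)) i := by
    rw [Matrix.mul_assoc, Matrix.trace]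
    refine Finset.sum_congr rfl fun j _ => ?_
    simp only [Matrix.diag, Matrix.mul_apply, Matrix.transpose_apply, Matrix.mulVec, dotProduct]
  rw [hcol]
  calc |∑ j, ∑ i, (fun k => H k j) i * (A.mulVec (fun k => H k j)) i|
      ≤ ∑ j, |∑ i, (fun k => H k j) i * (A.mulVec (fun k => H k j)) i| :=
        Finset.abs_sum_le_sum_abs _ _
    _ ≤ ∑ j, spec A * ∑ i, (H i j) ^ 2 :=
        Finset.sum_le_sum fun j _ => abs_quad_vec_le A _
    _ = spec A * (frob H) ^ 2 := by rw [← Finset.mul_sum, frob_sq, Finset.sum_comm]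

/-- Second-order Taylor expansion of the quadratic around `Z`. -/
lemma quad_expand {n m : ℕ} (A : Matrix (Fin n) (Fin n) ℝ) (hA : A.IsSymm)
    (B : Matrix (Fin n) (Fin m) ℝ) (c : ℝ) (Z Y : Matrix (Fin n) (Fin m) ℝ) :
    quadF A B c Y = quadF A B c Z + ((gradF A B Z)ᵀ * (Y - Z)).trace
      + ((Y - Z)ᵀ * A * (Y - Z)).trace := by
  have key : ∀ P Q : Matrix (Fin n) (Fin m) ℝ,
      (Pᵀ * (A * Q)).trace = (Qᵀ * (A * P)).trace := by
    intro P Q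
    rw [← Matrix.trace_transpose (Qᵀ * (A * P))]
    simp [Matrix.transpose_mul, Matrix.mul_assoc, hA.eq]
  simp only [quadF, gradF, Matrix.transpose_smul, Matrix.smul_mul, Matrix.trace_smul, smul_eq_mul,
    Matrix.transpose_add, Matrix.transpose_sub, Matrix.add_mul, Matrix.sub_mul, Matrix.mul_sub,
    Matrix.mul_add, Matrix.trace_add, Matrix.trace_sub, Matrix.transpose_mul, hA.eq,
    Matrix.mul_assoc]
  linarith [key Y Z]

theorem proximal_minimizer_distance_bound {n m : ℕ}
    (F : Set (Matrix (Fin n) (Fin m) ℝ)) (hFne : F.Nonempty) (hFcl : IsClosed F)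
    (A₀ : Matrix (Fin n) (Fin n) ℝ) (hA₀ : A₀.IsSymm)
    (B₀ : Matrix (Fin n) (Fin m) ℝ) (c₀ : ℝ)
    (Ych : Matrix (Fin n) (Fin m) ℝ) (η : ℝ) (hη : spec A₀ < η)
    (Yst : Matrix (Fin n) (Fin m) ℝ) (hYst : Yst ∈ F)
    (hmin : ∀ Y ∈ F, quadF A₀ B₀ c₀ Yst + η * (frob (Yst - Ych)) ^ 2 ≤
      quadF A₀ B₀ c₀ Y + η * (frob (Y - Ych)) ^ 2) :
    0 ≤ frob (Yst - Ych) - distF F Ych ∧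
      frob (Yst - Ych) - distF F Ych ≤
        (spec A₀ * distF F Ych + frob (gradF A₀ B₀ Ych)) / (η - spec A₀) := by
  obtain ⟨Yb, hYb, hYbd⟩ := distF_exists F hFne hFcl Ych
  have hd_le_r : distF F Ych ≤ frob (Yst - Ych) := distF_le F Ych Yst hYst
  refine ⟨by linarith, ?_⟩
  set d := distF F Ych with hd
  set r := frob (Yst - Ych) with hr
  set s := spec A₀ with hs
  set g := frob (gradF A₀ B₀ Ych) with hg
  have hd0 : 0 ≤ d := hYbd ▸ frob_nonneg _
  have hg0 : 0 ≤ g := frob_nonneg _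
  have hs0 : 0 ≤ s := spec_nonneg _
  have h1 := hmin Yb hYb
  rw [quad_expand A₀ hA₀ B₀ c₀ Ych Yst, quad_expand A₀ hA₀ B₀ c₀ Ych Yb, hYbd] at h1
  have e1 := abs_le.mp (abs_trace_le (gradF A₀ B₀ Ych) (Yst - Ych))
  have e2' := abs_le.mp (abs_trace_le (gradF A₀ B₀ Ych) (Yb - Ych))
  rw [hYbd] at e2'
  have e3 := abs_le.mp (abs_trace_quad_le A₀ (Yst - Ych))
  have e4' := abs_le.mp (abs_trace_quad_le A₀ (Yb - Ych))
  rw [hYbd] at e4'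
  rw [le_div_iff₀ (by linarith : (0:ℝ) < η - s)]
  have hineq : η * r ^ 2 - η * d ^ 2 ≤ g * r + g * d + s * r ^ 2 + s * d ^ 2 := by
    linarith [e1.1, e2'.2, e3.1, e4'.2]
  have key : (η - s) * (r ^ 2 - d ^ 2) ≤ (s * d + g) * (r + d) := by
    nlinarith [mul_nonneg (mul_nonneg hs0 hd0) (by linarith : (0:ℝ) ≤ r - d)]
  rcases eq_or_lt_of_le (by linarith : (0:ℝ) ≤ r + d) with h0 | h0
  · have hr0 : r = 0 := by linarith
    have hdd : d = 0 := by linarith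
    rw [hr0, hdd]
    nlinarith
  · nlinarith [key, h0]
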